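/- Let S_t : W → ℝ^m be investment descriptions for t = 0,...,n-1 with ∑_{i=1}^m S_{ti}(w) = 1 for all w, let x_t ∈ ℝ^m be strictly positive return vectors, and define R_t(w) = ∏_{s=0}^{t-1} S_s(w)·x_s (with R_0(w) = 1). Define the universal strategy's investment description U_t = (∫_W S_t(w) R_t(w) dμ(w)) / (∫_W R_t(w) dμ(w)) for a probability measure μ on W. Then the cumulative return ∏_{t=0}^{n-1} U_t · x_t equals ∫_W R_n(w) dμ(w). -/
import Mathlib


open MeasureTheory Finset

/-- Cumulative return up to time `t` of the strategy with parameter `w`: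
`R_t(w) = ∏_{s<t} S_s(w)·x_s`. -/
noncomputable def cumRet {W : Type*} {m : ℕ} (S : ℕ → W → Fin m → ℝ)
    (x : ℕ → Fin m → ℝ) (t : ℕ) (w : W) : ℝ :=
  ∏ s ∈ Finset.range t, ∑ i, S s w i * x s i

/-- The cumulative return of the universal strategy
`U_t = (∫ S_t R_t dμ)/(∫ R_t dμ)` telescopes: `∏_{t<n} U_t·x_t = ∫ R_n dμ`. -/
theorem universal_return_is_average {W : Type*} [MeasurableSpace W]
    (μ : Measure W) [IsProbabilityMeasure μ] (m n : ℕ)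
    (S : ℕ → W → Fin m → ℝ) (x : ℕ → Fin m → ℝ)
    (hSsum : ∀ t w, ∑ i, S t w i = 1)
    (hSnonneg : ∀ t w i, 0 ≤ S t w i)
    (hpos : ∀ t w, 0 < ∑ i, S t w i * x t i)
    (hint : ∀ t, Integrable (fun w => cumRet S x t w) μ)
    (hint' : ∀ t i, Integrable (fun w => S t w i * cumRet S x t w) μ)
    (hden : ∀ t, (∫ w, cumRet S x t w ∂μ) ≠ 0) :
    (∏ t ∈ Finset.range n,
        ∑ i, ((∫ w, S t w i * cumRet S x t w ∂μ) / (∫ w, cumRet S x t w ∂μ)) * x t i)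
      = ∫ w, cumRet S x n w ∂μ := by
  induction n with
  | zero =>
    simp [cumRet]
  | succ n ih =>
    rw [Finset.prod_range_succ, ih]
    have hstep : (∫ w, cumRet S x (n+1) w ∂μ)
        = ∑ i, (∫ w, S n w i * cumRet S x n w ∂μ) * x n i := by
      have : ∀ w, cumRet S x (n+1) w
          = ∑ i, (S n w i * cumRet S x n w) * x n i := by
        intro w
        simp only [cumRet, Finset.prod_range_succ]
        rw [Finset.mul_sum]
        exact Finset.sum_congr rfl fun i _ => by ring
      simp_rw [this]
      rw [integral_finset_sum]
      · congr 1
        ext i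
        rw [← integral_mul_const]
      · intro i _
        exact (hint' n i).mul_const _
    rw [hstep]
    rw [Finset.mul_sum]
    congr 1
    ext i
    rw [← mul_assoc, mul_comm (∫ w, cumRet S x n w ∂μ), div_mul_cancel₀ _ (hden n)]
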